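/- arXiv:1405.0816 — 5 statements merged into one kernel-verified Lean document; each statement's English description precedes it below -/
import Mathlib

section
/- For every integer r ≥ 1, the following identity holds in ℚ(q): E^(r-1) − P/E + (q−1)^r·(I/(q^3−q)) + (1/2)(q^2−1)^r + (1/6)(q−1)^(2r) + (1/3)(q^2+q+1)^r = (q^8−q^6−q^5+q^3)^(r−1) + (q−1)^(2r−2)·(q^(3r−3) − q^r) + (1/6)(q−1)^(2r−2)·q·(q+1) + (1/2)(q^2−1)^(r−1)·q·(q−1) + (1/3)(q^2+q+1)^(r−1)·q·(q+1) − (q−1)^(r−1)·q^(r−1)·(q^2−1)^(r−1)·(2q^(2r−2) − q), where E = q^8−q^6−q^5+q^3, I = (q^3−q)^r − (1/2)(q^2−q)(q+1)^r − (1/2)(q^2+q)(q−1)^r − (q^(r−1)−1)(q−1)^(r−1)(q^3−q), and P = (1/3)(q^2+q+1)^r(q−1)^2 q^3(q+1) + (q^2+q+1)(2q^(2r)−q^2)(q−1)^(2r) q^r (q+1)^r − (1/3)(q−1)^(2r)(q+1)(q^2+q+1)(3q^(3r) − 3q^(r+2) + q^3). (This is the assembly of the E-polynomial of the SL(3,ℂ)-character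 variety of the free group F_r from the E-polynomials of its irreducible and reducible loci, giving the formula of the main theorem.) -/
set_option maxHeartbeats 1000000

instance : CharZero (RatFunc ℚ) :=
  charZero_of_injective_algebraMap (RatFunc.algebraMap_injective ℚ)


/-- The variable `q`, viewed as a rational function in `ℚ(q)`. -/
noncomputable def q : RatFunc ℚ := RatFunc.X

/-- `E = e(SL(3,ℂ))`. -/
noncomputable def E : RatFunc ℚ := q^8 - q^6 - q^5 + q^3

/-- `I = e(R^irr_{r,2})`, the E-polynomial of the space of irreducible
representations of `F_r` in `SL(2,ℂ)`. -/
noncomputable def I (r : ℕ) : RatFunc ℚ :=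
  (q^3 - q)^r - (1/2) * (q^2 - q) * (q + 1)^r - (1/2) * (q^2 + q) * (q - 1)^r
    - (q^(r-1) - 1) * (q - 1)^(r-1) * (q^3 - q)

/-- `P = e(R^red_{r,3})`, the E-polynomial of the space of reducible
representations of `F_r` in `SL(3,ℂ)`. -/
noncomputable def P (r : ℕ) : RatFunc ℚ :=
  (1/3) * (q^2 + q + 1)^r * (q - 1)^2 * q^3 * (q + 1)
    + (q^2 + q + 1) * (2 * q^(2*r) - q^2) * (q - 1)^(2*r) * q^r * (q + 1)^r
    - (1/3) * (q - 1)^(2*r) * (q + 1) * (q^2 + q + 1)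
        * (3 * q^(3*r) - 3 * q^(r+2) + q^3)

/-- Assembly of the E-polynomial of the `SL(3,ℂ)`-character variety of the free
group `F_r` from the E-polynomials of its irreducible and reducible loci. -/
theorem sl3_char_variety_E_polynomial (r : ℕ) (hr : 1 ≤ r) :
    E^(r-1) - P r / E + (q - 1)^r * (I r / (q^3 - q))
      + (1/2) * (q^2 - 1)^r + (1/6) * (q - 1)^(2*r) + (1/3) * (q^2 + q + 1)^r
    = (q^8 - q^6 - q^5 + q^3)^(r-1)
      + (q - 1)^(2*r-2) * (q^(3*r-3) - q^r)
      + (1/6) * (q - 1)^(2*r-2) * q * (q + 1)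
      + (1/2) * (q^2 - 1)^(r-1) * q * (q - 1)
      + (1/3) * (q^2 + q + 1)^(r-1) * q * (q + 1)
      - (q - 1)^(r-1) * q^(r-1) * (q^2 - 1)^(r-1) * (2 * q^(2*r-2) - q) := by
  have hq : q ≠ 0 := RatFunc.X_ne_zero
  have key : ∀ p : Polynomial ℚ, p ≠ 0 → (algebraMap (Polynomial ℚ) (RatFunc ℚ)) p ≠ 0 := by
    intro p hp h
    exact hp (RatFunc.algebraMap_injective ℚ (by simpa using h))
  have h1 : q - 1 ≠ 0 := by
    have := key (Polynomial.X - 1) (by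
      intro h; have := congrArg (Polynomial.eval 2) h; simp at this; norm_num at this)
    simpa [q, map_sub] using this
  have h2 : q + 1 ≠ 0 := by
    have := key (Polynomial.X + 1) (by
      intro h; have := congrArg (Polynomial.eval 2) h; simp at this; norm_num at this)
    simpa [q, map_add] using this
  have h3 : q ^ 2 + q + 1 ≠ 0 := by
    have := key (Polynomial.X ^ 2 + Polynomial.X + 1) (by
      intro h; have := congrArg (Polynomial.eval 2) h; simp at this; norm_num at this)
    simpa [q, map_add, map_pow] using this
  have hE : E ≠ 0 := by
    have hfac : E = q ^ 3 * (q - 1) ^ 2 * (q + 1) * (q ^ 2 + q + 1) := by unfold E; ring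
    rw [hfac]
    exact mul_ne_zero (mul_ne_zero (mul_ne_zero (pow_ne_zero _ hq) (pow_ne_zero _ h1)) h2) h3
  have hD : q ^ 3 - q ≠ 0 := by
    have hfac : q ^ 3 - q = q * (q - 1) * (q + 1) := by ring
    rw [hfac]
    exact mul_ne_zero (mul_ne_zero hq h1) h2
  obtain ⟨s, rfl⟩ := Nat.exists_eq_add_of_le hr
  have e1 : 1 + s - 1 = s := by omega
  have e2 : 2 * (1 + s) - 2 = 2 * s := by omega
  have e3 : 3 * (1 + s) - 3 = 3 * s := by omega
  have e4 : 2 * (1 + s) = 2 * s + 2 := by omega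
  have e5 : 3 * (1 + s) = 3 * s + 3 := by omega
  have e6 : 1 + s + 2 = s + 3 := by omega
  have hP : P (1 + s) = E * ((1/3) * (q^2 + q + 1)^s
      + (2 * q^(2*s) - 1) * q^s * (q - 1)^(2*s) * (q + 1)^s
      - (1/3) * (q - 1)^(2*s) * (3 * q^(3*s) - 3 * q^s + 1)) := by
    unfold P E
    rw [e4, e5, e6]
    ring
  have hI : I (1 + s) = (q^3 - q) * ((q^3 - q)^s - (1/2) * (q + 1)^s
      - (1/2) * (q - 1)^s - (q^s - 1) * (q - 1)^s) := by
    unfold I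
    rw [e1]
    ring
  rw [hP, hI, e1, e2, e3, e4,
    mul_div_cancel_left₀ _ hE, mul_div_cancel_left₀ _ hD]
  unfold E
  have f1 : (q^3 - q) = q * (q - 1) * (q + 1) := by ring
  have f2 : (q^2 - 1 : RatFunc ℚ) = (q - 1) * (q + 1) := by ring
  have f3 : (q^8 - q^6 - q^5 + q^3 : RatFunc ℚ)
      = q ^ 3 * (q - 1) ^ 2 * (q + 1) * (q ^ 2 + q + 1) := by ring
  rw [f1, f2, f3]
  simp only [mul_pow, pow_mul, ← pow_mul]
  ring
end

section
/- For every integer r ≥ 1, the following identity holds in ℚ(q), with E = q^8−q^6−q^5+q^3: 3^r + 3^r(q^r−1)·E/((q−1)^2 q^3) + 3^r(q^r−1)(q^r−q)·E/((q^2−1)(q^2−q)q^2) + 3^r(q^r−1)(q^r−q)·E/((q^2−1)(q^2−q)q^2) + 3^r(q^r−1)^2 q^r·E/((q−1)^2 q^3) = 3^r·(1 + (1+q+q^2)(q^(3r+1) + q^(3r) − 2q^(2r+1) + q − 1)). (This is the computation of the E-polynomial e(R_1) of the stratum of reducible representations of F_r in SL(3,ℂ) whose matrices all have all eigenvalues equal.)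 -/
/-- Computation of `e(R_1)`, the E-polynomial of the stratum of reducible
representations of `F_r` in `SL(3,ℂ)` whose matrices all have all eigenvalues
equal, as a sum of the substrata `R_{11}, ..., R_{15}`. -/
theorem e_R1_stratum (r : ℕ) (hr : 1 ≤ r) :
    3^r + 3^r * (q^r - 1) * E / ((q - 1)^2 * q^3)
      + 3^r * (q^r - 1) * (q^r - q) * E / ((q^2 - 1) * (q^2 - q) * q^2)
      + 3^r * (q^r - 1) * (q^r - q) * E / ((q^2 - 1) * (q^2 - q) * q^2)
      + 3^r * (q^r - 1)^2 * q^r * E / ((q - 1)^2 * q^3)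
    = 3^r * (1 + (1 + q + q^2) * (q^(3*r+1) + q^(3*r) - 2 * q^(2*r+1) + q - 1)) := by
  have hq : q ≠ 0 := by simpa [q] using RatFunc.X_ne_zero (K := ℚ)
  have h1 : q - 1 ≠ 0 := by
    have := RatFunc.algebraMap_ne_zero (K := ℚ) (Polynomial.X_sub_C_ne_zero (1:ℚ))
    simpa [q, sub_ne_zero] using this
  have h2 : q + 1 ≠ 0 := by
    have := RatFunc.algebraMap_ne_zero (K := ℚ) (Polynomial.X_sub_C_ne_zero (-1:ℚ))
    simpa [q, sub_neg_eq_add] using this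
  have hd1 : (q - 1)^2 * q^3 ≠ 0 := mul_ne_zero (pow_ne_zero _ h1) (pow_ne_zero _ hq)
  have hd2 : (q^2 - 1) * (q^2 - q) * q^2 ≠ 0 := by
    have e1 : q^2 - 1 = (q - 1) * (q + 1) := by ring
    have e2 : q^2 - q = q * (q - 1) := by ring
    rw [e1, e2]
    exact mul_ne_zero (mul_ne_zero (mul_ne_zero h1 h2) (mul_ne_zero hq h1)) (pow_ne_zero _ hq)
  have hA : E / ((q - 1)^2 * q^3) = (q^2 + q + 1) * (q + 1) := by
    rw [div_eq_iff hd1, E]; ring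
  have hB : E / ((q^2 - 1) * (q^2 - q) * q^2) = q^2 + q + 1 := by
    rw [div_eq_iff hd2, E]; ring
  simp only [mul_div_assoc]
  rw [hA, hB]
  have e1 : q^(3*r+1) = (q^r)^3 * q := by rw [pow_succ, mul_comm 3 r, pow_mul]
  have e2 : q^(3*r) = (q^r)^3 := by rw [mul_comm 3 r, pow_mul]
  have e3 : q^(2*r+1) = (q^r)^2 * q := by rw [pow_succ, mul_comm 2 r, pow_mul]
  rw [e1, e2, e3]
  ring
end

section
/- For every integer r ≥ 1, the polynomial q^8 − q^6 − q^5 + q^3 divides the polynomial (1/3)(q^2+q+1)^r (q−1)^2 q^3 (q+1) + (q^2+q+1)(2q^(2r)−q^2)(q−1)^(2r) q^r (q+1)^r − (1/3)(q−1)^(2r)(q+1)(q^2+q+1)(3q^(3r) − 3q^(r+2) + q^3) in the polynomial ring ℚ[q]. (This divisibility is needed so that the E-polynomial of the irreducible locus of the SL(3,ℂ)-character variety, obtained by dividing by e(PGL(3,ℂ)) = q^8−q^6−q^5+q^3, is again a polynomial.) -/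
open Polynomial

/-- The E-polynomial `q^8 - q^6 - q^5 + q^3` of `PGL(3,ℂ)` divides the
E-polynomial of the space of reducible representations of the free group `F_r`
in `SL(3,ℂ)`, in the polynomial ring `ℚ[q]`. -/
theorem pgl3_divides_e_reducible (r : ℕ) (hr : 1 ≤ r) :
    (X^8 - X^6 - X^5 + X^3 : Polynomial ℚ) ∣
      (C (1/3 : ℚ) * (X^2 + X + 1)^r * (X - 1)^2 * X^3 * (X + 1)
        + (X^2 + X + 1) * (2 * X^(2*r) - X^2) * (X - 1)^(2*r) * X^r * (X + 1)^r
        - C (1/3 : ℚ) * (X - 1)^(2*r) * (X + 1) * (X^2 + X + 1)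
            * (3 * X^(3*r) - 3 * X^(r+2) + X^3)) := by
  obtain ⟨k, rfl⟩ : ∃ k, r = k + 1 := ⟨r - 1, (Nat.succ_pred_eq_of_pos hr).symm⟩
  refine ⟨C (1/3 : ℚ) * (X^2 + X + 1)^k
      + (2 * X^(2*k) - 1) * (X - 1)^(2*k) * X^k * (X + 1)^k
      - C (1/3 : ℚ) * (X - 1)^(2*k) * (3 * X^(3*k) - 3 * X^k + 1), ?_⟩
  ring
end

section
/- Define on triples (a,b,c) ∈ ℚ(q)^3 the commutative ring structure with componentwise addition, unit (1,0,0), and multiplication (a,b,c)·(a',b',c') = (a a' + b b' + c c', a b' + a' b + c c', a c' + a' c + b c' + b' c + c c'). Then for every integer r ≥ 0, the r-th power of the element (q^2, 1, −q) in this ring equals ((1/2)(q^2−1)^r + (1/6)(q−1)^(2r) + (1/3)(q^2+q+1)^r, −(1/2)(q^2−1)^r + (1/6)(q−1)^(2r) + (1/3)(q^2+q+1)^r, (1/3)((q−1)^(2r) − (q^2+q+1)^r)). -/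
instance inst_s8 : CharZero (RatFunc ℚ) :=
  charZero_of_injective_algebraMap (algebraMap ℚ (RatFunc ℚ)).injective


/-- Multiplication on triples `(a,b,c)` encoding `a·T + b·S + c·V` in the
representation ring `R(Σ₃)` (tensored with a commutative ring `K`), determined
by `T⊗T=T`, `T⊗S=S`, `T⊗V=V`, `S⊗S=T`, `S⊗V=V`, `V⊗V=T⊕S⊕V`. -/
def tmul {K : Type*} [CommRing K] : K × K × K → K × K × K → K × K × K :=
  fun x y =>
    (x.1 * y.1 + x.2.1 * y.2.1 + x.2.2 * y.2.2,
     x.1 * y.2.1 + y.1 * x.2.1 + x.2.2 * y.2.2,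
     x.1 * y.2.2 + y.1 * x.2.2 + x.2.1 * y.2.2 + y.2.1 * x.2.2 + x.2.2 * y.2.2)

/-- Powers in the ring of triples, with unit `(1,0,0)` (the trivial
representation `T`). -/
def tpow {K : Type*} [CommRing K] (x : K × K × K) : ℕ → K × K × K
  | 0 => (1, 0, 0)
  | n + 1 => tmul x (tpow x n)

/-- The `r`-th power of the element `(q², 1, −q)` (the `Σ₃`-equivariant
E-polynomial of the torus `{(λ,μ,γ) ∈ (ℂ*)³ : λμγ = 1}`) in the representation
ring of `Σ₃` with coefficients in `ℚ(q)`. -/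
theorem tpow_equivariant_torus (r : ℕ) :
    tpow ((RatFunc.X^2, 1, -RatFunc.X) : RatFunc ℚ × RatFunc ℚ × RatFunc ℚ) r
      = ((1/2) * (RatFunc.X^2 - 1)^r + (1/6) * (RatFunc.X - 1)^(2*r)
            + (1/3) * (RatFunc.X^2 + RatFunc.X + 1)^r,
         -(1/2) * (RatFunc.X^2 - 1)^r + (1/6) * (RatFunc.X - 1)^(2*r)
            + (1/3) * (RatFunc.X^2 + RatFunc.X + 1)^r,
         (1/3) * ((RatFunc.X - 1)^(2*r) - (RatFunc.X^2 + RatFunc.X + 1)^r)) := by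
  induction r with
  | zero =>
    show _ = ((_ : RatFunc ℚ), (_ : RatFunc ℚ), (_ : RatFunc ℚ))
    simp only [tpow, pow_zero, mul_zero, mul_one]
    refine Prod.ext (by ring) (Prod.ext (by ring) (by ring))
  | succ n ih =>
    rw [tpow, ih, tmul]
    refine Prod.ext ?_ (Prod.ext ?_ ?_) <;> simp only <;> ring
end

section
/- Define on triples (a,b,c) ∈ ℤ^3 the commutative ring structure with componentwise addition, unit (1,0,0), and multiplication (a,b,c)·(a',b',c') = (a a' + b b' + c c', a b' + a' b + c c', a c' + a' c + b c' + b' c + c c'). Let a : ℕ → ℤ be the sequence with a(0) = 0, a(1) = 1 and a(b+2) = a(b+1) + 2·a(b). Then for every integer b ≥ 1, the b-th power of the element (0,0,1) in this ring equals (a(b−1), a(b−1), a(b)). -/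
/-- The identity `V^b = a_{b-1}·T + a_{b-1}·S + a_b·V` in `R(Σ₃)`, where
`a_b` satisfies `a_0 = 0`, `a_1 = 1`, `a_{b+2} = a_{b+1} + 2·a_b`. -/
theorem tpow_V (a : ℕ → ℤ) (ha0 : a 0 = 0) (ha1 : a 1 = 1)
    (harec : ∀ b : ℕ, a (b + 2) = a (b + 1) + 2 * a b)
    (b : ℕ) (hb : 1 ≤ b) :
    tpow ((0, 0, 1) : ℤ × ℤ × ℤ) b = (a (b - 1), a (b - 1), a b) := by
  induction b with
  | zero => omega
  | succ n ih =>
    cases n with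
    | zero => simp [tpow, tmul, ha0, ha1]
    | succ m =>
      have h := ih (by omega)
      show tmul (0, 0, 1) (tpow ((0, 0, 1) : ℤ × ℤ × ℤ) (m + 1)) = _
      rw [h]
      simp only [tmul, Nat.succ_sub_one, harec m]
      refine Prod.ext ?_ (Prod.ext ?_ ?_) <;> ring
end
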